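/- Let ι be a nonempty finite type, α ∈ [0,1), β > 0, let r : ℝ → ι → ℝ be continuous, and let x : ℝ → ι → ℝ be a trajectory of the single-agent SQL dynamics for (α, β, r). Then for every choice distribution p (p_i ≥ 0 for all i and ∑_i p_i = 1) and every T ≥ 0, ∫₀ᵀ (u^H(p,t) − u^H(x(t),t)) dt ≤ −∑_i p_i · ln x_i(0). In particular, the modified regret R^H(T) := sup over choice distributions p of ∫₀ᵀ (u^H(p,t) − u^H(x(t),t)) dt satisfies R^H(T) ≤ max_i (−ln x_i(0)) for all T ≥ 0, a constant independent of T. -/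

import Mathlib

open Filter Real

lemma sql_gibbs {ι : Type*} [Fintype ι] (p q : ι → ℝ) (hp : ∀ i, 0 ≤ p i)
    (hq : ∀ i, 0 < q i) (hps : ∑ i, p i = 1) (hqs : ∑ i, q i = 1) :
    ∑ i, p i * Real.log (q i) - ∑ i, p i * Real.log (p i) ≤ 0 := by
  have h : ∀ i : ι, p i * Real.log (q i) - p i * Real.log (p i) ≤ q i - p i := by
    intro i
    rcases eq_or_lt_of_le (hp i) with h0 | h0
    · simp [← h0]; exact (hq i).le
    · have hdiv : 0 < q i / p i := div_pos (hq i) h0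
      have hlog := Real.log_le_sub_one_of_pos hdiv
      rw [Real.log_div (hq i).ne' h0.ne'] at hlog
      have := mul_le_mul_of_nonneg_left hlog h0.le
      calc p i * Real.log (q i) - p i * Real.log (p i)
          = p i * (Real.log (q i) - Real.log (p i)) := by ring
        _ ≤ p i * (q i / p i - 1) := this
        _ = q i - p i := by field_simp
  calc ∑ i, p i * Real.log (q i) - ∑ i, p i * Real.log (p i)
      = ∑ i, (p i * Real.log (q i) - p i * Real.log (p i)) := by
        rw [Finset.sum_sub_distrib]
    _ ≤ ∑ i, (q i - p i) := Finset.sum_le_sum fun i _ => h i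
    _ = 0 := by rw [Finset.sum_sub_distrib, hps, hqs, sub_self]

theorem sql_bounded_regret {ι : Type*} [Fintype ι] [Nonempty ι]
    (α β : ℝ) (hα₀ : 0 ≤ α) (hα₁ : α < 1) (hβ : 0 < β)
    (r : ℝ → ι → ℝ) (hr : ∀ i, Continuous fun t => r t i)
    (x : ℝ → ι → ℝ) (hxdiff : ∀ i, Differentiable ℝ fun t => x t i)
    (hxpos : ∀ t ≥ (0 : ℝ), ∀ i, 0 < x t i)
    (hxsum : ∀ t ≥ (0 : ℝ), ∑ i, x t i = 1)
    (hode : ∀ t ≥ (0 : ℝ), ∀ i, deriv (fun s => x s i) t =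
      x t i * (β * (r t i - ∑ j, x t j * r t j)
        - α * (Real.log (x t i) - ∑ j, x t j * Real.log (x t j)))) :
    (∀ p : ι → ℝ, (∀ i, 0 ≤ p i) → ∑ i, p i = 1 → ∀ T ≥ (0 : ℝ),
      (∫ t in (0:ℝ)..T,
          ((β * ∑ i, p i * r t i - α * ∑ i, p i * Real.log (p i))
            - (β * ∑ i, x t i * r t i - α * ∑ i, x t i * Real.log (x t i))))
        ≤ -∑ i, p i * Real.log (x 0 i)) ∧
    (∀ T ≥ (0 : ℝ),
      sSup {R : ℝ | ∃ p : ι → ℝ, (∀ i, 0 ≤ p i) ∧ (∑ i, p i = 1) ∧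
          R = ∫ t in (0:ℝ)..T,
              ((β * ∑ i, p i * r t i - α * ∑ i, p i * Real.log (p i))
                - (β * ∑ i, x t i * r t i - α * ∑ i, x t i * Real.log (x t i)))}
        ≤ Finset.univ.sup' Finset.univ_nonempty (fun i => -Real.log (x 0 i))) := by
  have hxcont : ∀ i, Continuous fun t => x t i := fun i => (hxdiff i).continuous
  have key : ∀ p : ι → ℝ, (∀ i, 0 ≤ p i) → ∑ i, p i = 1 → ∀ T ≥ (0 : ℝ),
      (∫ t in (0:ℝ)..T,
          ((β * ∑ i, p i * r t i - α * ∑ i, p i * Real.log (p i))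
            - (β * ∑ i, x t i * r t i - α * ∑ i, x t i * Real.log (x t i))))
        ≤ -∑ i, p i * Real.log (x 0 i) := by
    intro p hp hps T hT
    set f : ℝ → ℝ := fun t => ∑ i, p i * Real.log (x t i) with hf
    set g : ℝ → ℝ := fun t => ∑ i, p i * (β * (r t i - ∑ j, x t j * r t j)
        - α * (Real.log (x t i) - ∑ j, x t j * Real.log (x t j))) with hg
    set φ : ℝ → ℝ := fun t => (β * ∑ i, p i * r t i - α * ∑ i, p i * Real.log (p i))
        - (β * ∑ i, x t i * r t i - α * ∑ i, x t i * Real.log (x t i)) with hφ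
    -- continuity of log ∘ x on [0, T]
    have hlogcont : ∀ i, ContinuousOn (fun t => Real.log (x t i)) (Set.Icc (0:ℝ) T) := by
      intro i
      exact ContinuousOn.log (hxcont i).continuousOn fun t ht => (hxpos t ht.1 i).ne'
    have hgcont : ContinuousOn g (Set.Icc (0:ℝ) T) := by
      apply continuousOn_finset_sum
      intro i _
      apply ContinuousOn.mul continuousOn_const
      apply ContinuousOn.sub
      · exact continuousOn_const.mul (((hr i).continuousOn).sub
          (continuousOn_finset_sum _ fun j _ => ((hxcont j).continuousOn).mul (hr j).continuousOn))
      · exact continuousOn_const.mul ((hlogcont i).sub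
          (continuousOn_finset_sum _ fun j _ => ((hxcont j).continuousOn).mul (hlogcont j)))
    have hφcont : ContinuousOn φ (Set.Icc (0:ℝ) T) := by
      apply ContinuousOn.sub
      · exact (continuousOn_const.mul (continuousOn_finset_sum _ fun i _ =>
          continuousOn_const.mul (hr i).continuousOn)).sub continuousOn_const
      · apply ContinuousOn.sub
        · exact continuousOn_const.mul (continuousOn_finset_sum _ fun i _ =>
            ((hxcont i).continuousOn).mul (hr i).continuousOn)
        · exact continuousOn_const.mul (continuousOn_finset_sum _ fun i _ =>
            ((hxcont i).continuousOn).mul (hlogcont i))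
    have huIcc : Set.uIcc (0:ℝ) T = Set.Icc 0 T := Set.uIcc_of_le hT
    have hgint : IntervalIntegrable g MeasureTheory.volume 0 T :=
      (huIcc ▸ hgcont).intervalIntegrable
    have hφint : IntervalIntegrable φ MeasureTheory.volume 0 T :=
      (huIcc ▸ hφcont).intervalIntegrable
    -- f has derivative g on [0, T]
    have hderiv : ∀ t ∈ Set.uIcc (0:ℝ) T, HasDerivAt f (g t) t := by
      intro t ht
      rw [huIcc] at ht
      have ht0 : (0:ℝ) ≤ t := ht.1
      have h1 : HasDerivAt f (∑ i, p i * ((x t i)⁻¹ * deriv (fun s => x s i) t)) t := by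
        apply HasDerivAt.fun_sum
        intro i _
        exact (((Real.hasDerivAt_log (hxpos t ht0 i).ne').comp t
          ((hxdiff i).differentiableAt.hasDerivAt)).const_mul (p i))
      convert h1 using 1
      rw [hg]
      apply Finset.sum_congr rfl
      intro i _
      rw [hode t ht0 i]
      field_simp [(hxpos t ht0 i).ne']
    -- pointwise inequality φ ≤ g on [0, T]
    have hle : ∀ t ∈ Set.Icc (0:ℝ) T, φ t ≤ g t := by
      intro t ht
      have hKL := sql_gibbs p (x t) hp (hxpos t ht.1) hps (hxsum t ht.1)
      have hgeq : g t = (β * ∑ i, p i * r t i - α * ∑ i, p i * Real.log (x t i))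
          - (β * ∑ j, x t j * r t j - α * ∑ j, x t j * Real.log (x t j)) := by
        simp only [hg]
        have : ∀ i : ι, p i * (β * (r t i - ∑ j, x t j * r t j)
            - α * (Real.log (x t i) - ∑ j, x t j * Real.log (x t j)))
            = β * (p i * r t i) - α * (p i * Real.log (x t i))
              - p i * (β * (∑ j, x t j * r t j) - α * (∑ j, x t j * Real.log (x t j))) := by
          intro i; ring
        rw [Finset.sum_congr rfl fun i _ => this i]
        rw [Finset.sum_sub_distrib, Finset.sum_sub_distrib, ← Finset.mul_sum, ← Finset.mul_sum,
          ← Finset.sum_mul, hps]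
        ring
      rw [hgeq, hφ]
      have := mul_le_mul_of_nonneg_left hKL hα₀
      simp only
      nlinarith [this]
    have hFTC : ∫ t in (0:ℝ)..T, g t = f T - f 0 :=
      intervalIntegral.integral_eq_sub_of_hasDerivAt hderiv hgint
    have hmono : (∫ t in (0:ℝ)..T, φ t) ≤ ∫ t in (0:ℝ)..T, g t :=
      intervalIntegral.integral_mono_on hT hφint hgint hle
    have hfT : f T ≤ 0 := by
      apply Finset.sum_nonpos
      intro i _
      apply mul_nonpos_of_nonneg_of_nonpos (hp i)
      apply Real.log_nonpos (hxpos T hT i).le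
      calc x T i ≤ ∑ j, x T j :=
        Finset.single_le_sum (fun j _ => (hxpos T hT j).le) (Finset.mem_univ i)
        _ = 1 := hxsum T hT
    calc (∫ t in (0:ℝ)..T, φ t) ≤ f T - f 0 := hFTC ▸ hmono
      _ ≤ -f 0 := by linarith
      _ = -∑ i, p i * Real.log (x 0 i) := rfl
  refine ⟨key, ?_⟩
  intro T hT
  classical
  apply csSup_le
  · obtain ⟨i0⟩ := (inferInstance : Nonempty ι)
    refine ⟨_, fun i => if i = i0 then 1 else 0, fun i => by by_cases h : i = i0 <;> simp [h], by simp, rfl⟩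
  · rintro R ⟨p, hp, hps, rfl⟩
    have h1 := key p hp hps T hT
    have h2 : -∑ i, p i * Real.log (x 0 i)
        ≤ Finset.univ.sup' Finset.univ_nonempty (fun i => -Real.log (x 0 i)) := by
      have : -∑ i, p i * Real.log (x 0 i) = ∑ i, p i * (-Real.log (x 0 i)) := by
        rw [← Finset.sum_neg_distrib]; simp [mul_neg]
      rw [this]
      calc ∑ i, p i * (-Real.log (x 0 i))
          ≤ ∑ i, p i * (Finset.univ.sup' Finset.univ_nonempty fun j => -Real.log (x 0 j)) :=
            Finset.sum_le_sum fun i _ => mul_le_mul_of_nonneg_left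
              (Finset.le_sup' (fun j => -Real.log (x 0 j)) (Finset.mem_univ i)) (hp i)
        _ = _ := by rw [← Finset.sum_mul, hps, one_mul]
    linarith
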